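/- Every unitary 2×2 complex matrix U can be written in the form U = e^{iθ} · R_z(α) · H · R_z(β) · H · R_z(γ) for some real numbers θ, α, β, γ ∈ [0, 2π), where H = (1/√2) · [[1, 1], [1, −1]] is the Hadamard matrix and R_z(ω) = [[1, 0], [0, e^{iω}]]. -/

import Mathlib

open Matrix Real

/-- The 2×2 Hadamard matrix `(1/√2) [[1,1],[1,−1]]`. -/
noncomputable def Hadamard : Matrix (Fin 2) (Fin 2) ℂ :=
  ((Real.sqrt 2 : ℂ))⁻¹ • !![1, 1; 1, -1]

/-- The z-rotation gate `R_z(ω) = [[1,0],[0,e^{iω}]]`. -/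
noncomputable def Rz (ω : ℝ) : Matrix (Fin 2) (Fin 2) ℂ :=
  !![1, 0; 0, Complex.exp (Complex.I * ω)]

lemma prod_eq (α β γ : ℝ) :
    Rz α * Hadamard * Rz β * Hadamard * Rz γ =
      (2:ℂ)⁻¹ • !![1 + Complex.exp (Complex.I*β), (1 - Complex.exp (Complex.I*β)) * Complex.exp (Complex.I*γ);
        (1 - Complex.exp (Complex.I*β)) * Complex.exp (Complex.I*α),
        (1 + Complex.exp (Complex.I*β)) * Complex.exp (Complex.I*α) * Complex.exp (Complex.I*γ)] := by
  have h2 : ((Real.sqrt 2 : ℂ))⁻¹ ^ 2 = 1/2 := by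
    have : ((Real.sqrt 2 : ℂ)) ^ 2 = 2 := by
      norm_cast
      rw [sq, Real.mul_self_sqrt (by norm_num : (0:ℝ) ≤ 2)]
    rw [inv_pow, this]
    norm_num
  unfold Rz Hadamard
  ext i j
  fin_cases i <;> fin_cases j <;>
    simp [Matrix.mul_apply, Fin.sum_univ_two] <;> ring_nf <;>
    rw [h2] <;> ring

lemma abs_exp_arg (z : ℂ) :
    (‖z‖ : ℂ) * Complex.exp (Complex.I * Complex.arg z) = z := by
  rw [mul_comm Complex.I _]
  exact_mod_cast Complex.norm_mul_exp_arg_mul_I z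

lemma key (a b c d : ℂ)
    (h00 : a * (starRingEnd ℂ) a + b * (starRingEnd ℂ) b = 1)
    (h01 : a * (starRingEnd ℂ) c + b * (starRingEnd ℂ) d = 0)
    (g00 : (starRingEnd ℂ) a * a + (starRingEnd ℂ) c * c = 1)
    (g11 : (starRingEnd ℂ) b * b + (starRingEnd ℂ) d * d = 1) :
    ∃ θ α β γ : ℝ, !![a, b; c, d] = Complex.exp (Complex.I * θ) •
      (Rz α * Hadamard * Rz β * Hadamard * Rz γ) := by
  have ha2 : a * (starRingEnd ℂ) a = ((‖a‖ : ℝ):ℂ)^2 := by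
    rw [Complex.mul_conj, Complex.normSq_eq_norm_sq]; push_cast; rfl
  have hb2 : b * (starRingEnd ℂ) b = ((‖b‖ : ℝ):ℂ)^2 := by
    rw [Complex.mul_conj, Complex.normSq_eq_norm_sq]; push_cast; rfl
  set r := ‖a‖ with hr
  set s := ‖b‖ with hs
  have hrs : r^2 + s^2 = 1 := by
    have h := h00
    rw [ha2, hb2] at h
    exact_mod_cast h
  have hr0 : 0 ≤ r := norm_nonneg a
  have hs0 : 0 ≤ s := norm_nonneg b
  have hr1 : r ≤ 1 := by nlinarith
  have habs_c : ‖c‖ = s := by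
    have hcc := g00
    rw [mul_comm ((starRingEnd ℂ) a) a, mul_comm ((starRingEnd ℂ) c) c, ha2,
      Complex.mul_conj, Complex.normSq_eq_norm_sq] at hcc
    have h1 : r^2 + ‖c‖ ^ 2 = 1 := by exact_mod_cast hcc
    have h2 : ‖c‖ ^ 2 = s ^ 2 := by linarith
    calc ‖c‖ = √(‖c‖ ^ 2) := (Real.sqrt_sq (norm_nonneg c)).symm
      _ = √(s^2) := by rw [h2]
      _ = s := Real.sqrt_sq hs0
  have habs_d : ‖d‖ = r := by
    have hdd := g11
    rw [mul_comm ((starRingEnd ℂ) b) b, mul_comm ((starRingEnd ℂ) d) d, hb2,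
      Complex.mul_conj, Complex.normSq_eq_norm_sq] at hdd
    have h1 : s^2 + ‖d‖ ^ 2 = 1 := by exact_mod_cast hdd
    have h2 : ‖d‖ ^ 2 = r ^ 2 := by linarith
    calc ‖d‖ = √(‖d‖ ^ 2) := (Real.sqrt_sq (norm_nonneg d)).symm
      _ = √(r^2) := by rw [h2]
      _ = r := Real.sqrt_sq hr0
  set θ' : ℝ := Complex.arg a with hθ'
  set φb : ℝ := if b = 0 then Complex.arg d else Complex.arg (Complex.I * b) with hφbdef
  set φc : ℝ := if b = 0 then Complex.arg a else Complex.arg (Complex.I * c) with hφcdef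
  have F1 : a = (r:ℂ) * Complex.exp (Complex.I * θ') := by
    by_cases ha : a = 0
    · simp [ha, hr]
    · exact (abs_exp_arg a).symm
  have F2 : b = -Complex.I * (s:ℂ) * Complex.exp (Complex.I * φb) := by
    by_cases hb : b = 0
    · simp [hb, hs]
    · have h := abs_exp_arg (Complex.I * b)
      have habs : ‖(Complex.I * b)‖ = s := by simp [hs]
      rw [habs] at h
      rw [hφbdef, if_neg hb]
      linear_combination Complex.I * h + b * Complex.I_sq
  have F3 : c = -Complex.I * (s:ℂ) * Complex.exp (Complex.I * φc) := by
    by_cases hb : b = 0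
    · have hs0' : s = 0 := by rw [hs, hb]; simp
      have hc0 : c = 0 := norm_eq_zero.mp (habs_c.trans hs0')
      simp [hc0, hs0']
    · have h := abs_exp_arg (Complex.I * c)
      have habs : ‖(Complex.I * c)‖ = s := by simp [habs_c]
      rw [habs] at h
      rw [hφcdef, if_neg hb]
      linear_combination Complex.I * h + c * Complex.I_sq
  have F4 : d = (r:ℂ) * Complex.exp (Complex.I * (φb + φc - θ')) := by
    by_cases hb : b = 0
    · have hE : Complex.exp (Complex.I * ((φb:ℂ) + (φc:ℂ) - (θ':ℂ))) =
          Complex.exp (Complex.I * Complex.arg d) := by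
        rw [hφbdef, hφcdef, if_pos hb, if_pos hb, hθ']
        congr 1; ring
      rw [hE, ← habs_d]
      exact (abs_exp_arg d).symm
    · by_cases ha : a = 0
      · have hr0' : r = 0 := by rw [hr, ha]; simp
        have hd0 : d = 0 := norm_eq_zero.mp (habs_d.trans hr0')
        rw [hd0, hr0']
        simp
      · have hsne : s ≠ 0 := fun h => hb (norm_eq_zero.mp (hs ▸ h))
        have hsne' : (s:ℂ) ≠ 0 := by exact_mod_cast hsne
        have hane : a ≠ 0 := ha
        have h01' : (starRingEnd ℂ) a * c + (starRingEnd ℂ) b * d = 0 := by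
          have h := congrArg (starRingEnd ℂ) h01
          simpa using h
        have hkey : ((s:ℝ):ℂ)^2 * (a * d) = -(((r:ℝ):ℂ)^2) * (b * c) := by
          linear_combination a * b * h01' - b * c * ha2 - a * d * hb2
        have e1 : (s:ℂ) * Complex.exp (Complex.I * φb) = Complex.I * b := by
          linear_combination -Complex.I * F2 + ((s:ℂ) * Complex.exp (Complex.I * (φb:ℝ))) * Complex.I_sq
        have e2 : (s:ℂ) * Complex.exp (Complex.I * φc) = Complex.I * c := by
          linear_combination -Complex.I * F3 + ((s:ℂ) * Complex.exp (Complex.I * (φc:ℝ))) * Complex.I_sq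
        have hbc : b * c = -((s:ℂ)^2 * Complex.exp (Complex.I * φb) * Complex.exp (Complex.I * φc)) := by
          linear_combination ((s:ℂ) * Complex.exp (Complex.I*φc)) * e1 + (Complex.I*b) * e2 + b*c*Complex.I_sq
        have hX : Complex.exp (Complex.I * φb) * Complex.exp (Complex.I * φc) =
            Complex.exp (Complex.I * ((φb:ℂ) + (φc:ℂ) - (θ':ℂ))) * Complex.exp (Complex.I * θ') := by
          rw [← Complex.exp_add, ← Complex.exp_add]; congr 1; ring
        have h5 : (a * (s:ℂ)^2) * d = (a * (s:ℂ)^2) *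
            ((r:ℂ) * Complex.exp (Complex.I * ((φb:ℂ) + (φc:ℂ) - (θ':ℂ)))) := by
          linear_combination hkey - (r:ℂ)^2 * hbc + (r:ℂ)^2*(s:ℂ)^2*hX
            - (r:ℂ)*(s:ℂ)^2*(Complex.exp (Complex.I*((φb:ℂ)+(φc:ℂ)-(θ':ℂ)))) * F1
        exact mul_left_cancel₀ (mul_ne_zero hane (pow_ne_zero 2 hsne')) h5
  -- assembly
  refine ⟨θ' - Real.arccos r, φc - θ', 2 * Real.arccos r, φb - θ', ?_⟩
  have hEt : Complex.exp (Complex.I * ((Real.arccos r : ℝ):ℂ)) = (r:ℂ) + (s:ℂ) * Complex.I := by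
    rw [mul_comm Complex.I _, Complex.exp_mul_I, ← Complex.ofReal_cos, ← Complex.ofReal_sin,
      Real.cos_arccos (by linarith) hr1, Real.sin_arccos]
    have h2 : 1 - r^2 = s^2 := by linarith
    rw [h2, Real.sqrt_sq hs0]
  have hc' : (r:ℂ)^2 + (s:ℂ)^2 = 1 := by exact_mod_cast hrs
  have hEβ : Complex.exp (Complex.I * (2 * ((Real.arccos r : ℝ):ℂ))) =
      ((r:ℂ) + (s:ℂ)*Complex.I) * ((r:ℂ) + (s:ℂ)*Complex.I) := by
    rw [← hEt, ← Complex.exp_add]; congr 1; ring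
  have h1plus : 1 + Complex.exp (Complex.I * (2 * ((Real.arccos r : ℝ):ℂ))) =
      2 * (r:ℂ) * ((r:ℂ) + (s:ℂ)*Complex.I) := by
    rw [hEβ]; linear_combination -hc' + (s:ℂ)^2 * Complex.I_sq
  have h1minus : 1 - Complex.exp (Complex.I * (2 * ((Real.arccos r : ℝ):ℂ))) =
      -2 * Complex.I * (s:ℂ) * ((r:ℂ) + (s:ℂ)*Complex.I) := by
    rw [hEβ]; linear_combination -hc' + (s:ℂ)^2 * Complex.I_sq
  have hEθ : Complex.exp (Complex.I * ((θ':ℂ) - ((Real.arccos r : ℝ):ℂ))) * ((r:ℂ) + (s:ℂ)*Complex.I) =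
      Complex.exp (Complex.I * (θ':ℂ)) := by
    rw [← hEt, ← Complex.exp_add]; congr 1; ring
  have hEφb : Complex.exp (Complex.I * (φb:ℂ)) =
      Complex.exp (Complex.I * (θ':ℂ)) * Complex.exp (Complex.I * ((φb:ℂ) - (θ':ℂ))) := by
    rw [← Complex.exp_add]; congr 1; ring
  have hEφc : Complex.exp (Complex.I * (φc:ℂ)) =
      Complex.exp (Complex.I * (θ':ℂ)) * Complex.exp (Complex.I * ((φc:ℂ) - (θ':ℂ))) := by
    rw [← Complex.exp_add]; congr 1; ring
  have hsum : Complex.exp (Complex.I * ((φb:ℂ) + (φc:ℂ) - (θ':ℂ))) =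
      Complex.exp (Complex.I * (θ':ℂ)) * Complex.exp (Complex.I * ((φc:ℂ) - (θ':ℂ))) *
        Complex.exp (Complex.I * ((φb:ℂ) - (θ':ℂ))) := by
    rw [← Complex.exp_add, ← Complex.exp_add]; congr 1; ring
  rw [prod_eq]
  ext i j
  fin_cases i <;> fin_cases j <;> simp [Matrix.smul_apply]
  · rw [h1plus, F1, ← hEθ]; ring
  · rw [h1minus, F2, hEφb, ← hEθ]; ring
  · rw [h1minus, F3, hEφc, ← hEθ]; ring
  · rw [h1plus, F4, hsum, ← hEθ]; ring

lemma exp_mod (x : ℝ) : ∃ y ∈ Set.Ico (0:ℝ) (2*π),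
    Complex.exp (Complex.I * y) = Complex.exp (Complex.I * x) := by
  refine ⟨toIcoMod Real.two_pi_pos 0 x, ?_, ?_⟩
  · simpa using toIcoMod_mem_Ico Real.two_pi_pos 0 x
  · have h := self_sub_toIcoMod Real.two_pi_pos 0 x
    set k := toIcoDiv Real.two_pi_pos 0 x
    have hx : x = toIcoMod Real.two_pi_pos 0 x + k * (2*π) := by
      rw [zsmul_eq_mul] at h; linarith
    conv_rhs => rw [hx]
    push_cast
    rw [mul_add, Complex.exp_add]
    have h1 : Complex.exp (Complex.I * ((k:ℂ) * (2*(π:ℂ)))) = 1 := by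
      rw [show Complex.I * ((k:ℂ) * (2*(π:ℂ))) = (k:ℂ) * (2*(π:ℂ)*Complex.I) by ring]
      exact Complex.exp_int_mul_two_pi_mul_I k
    rw [h1, mul_one]

lemma Rz_congr {x y : ℝ} (h : Complex.exp (Complex.I * y) = Complex.exp (Complex.I * x)) :
    Rz y = Rz x := by
  unfold Rz; rw [h]

/-- **Euler-angle decomposition with Hadamard conjugation.**
Every `2×2` unitary matrix `U` can be written as
`U = e^{iθ} R_z(α) H R_z(β) H R_z(γ)` with `θ, α, β, γ ∈ [0, 2π)`. -/
theorem unitary_decomposition (U : Matrix (Fin 2) (Fin 2) ℂ)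
    (hU : U ∈ Matrix.unitaryGroup (Fin 2) ℂ) :
    ∃ θ α β γ : ℝ,
      θ ∈ Set.Ico (0 : ℝ) (2 * π) ∧ α ∈ Set.Ico (0 : ℝ) (2 * π) ∧
      β ∈ Set.Ico (0 : ℝ) (2 * π) ∧ γ ∈ Set.Ico (0 : ℝ) (2 * π) ∧
      U = Complex.exp (Complex.I * θ) •
        (Rz α * Hadamard * Rz β * Hadamard * Rz γ) := by
  have h1 := Matrix.mem_unitaryGroup_iff.mp hU
  have h2 := Matrix.mem_unitaryGroup_iff'.mp hU
  have h00 : (U * star U) 0 0 = (1 : Matrix (Fin 2) (Fin 2) ℂ) 0 0 := by rw [h1]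
  have h01 : (U * star U) 0 1 = (1 : Matrix (Fin 2) (Fin 2) ℂ) 0 1 := by rw [h1]
  have g00 : (star U * U) 0 0 = (1 : Matrix (Fin 2) (Fin 2) ℂ) 0 0 := by rw [h2]
  have g11 : (star U * U) 1 1 = (1 : Matrix (Fin 2) (Fin 2) ℂ) 1 1 := by rw [h2]
  simp [Matrix.mul_apply, Fin.sum_univ_two, Matrix.star_apply, Matrix.one_apply] at h00 h01 g00 g11
  obtain ⟨θ, α, β, γ, hM⟩ := key (U 0 0) (U 0 1) (U 1 0) (U 1 1)
    (by exact_mod_cast h00) (by exact_mod_cast h01) (by exact_mod_cast g00) (by exact_mod_cast g11)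
  obtain ⟨θ₁, hθ₁, hθe⟩ := exp_mod θ
  obtain ⟨α₁, hα₁, hαe⟩ := exp_mod α
  obtain ⟨β₁, hβ₁, hβe⟩ := exp_mod β
  obtain ⟨γ₁, hγ₁, hγe⟩ := exp_mod γ
  refine ⟨θ₁, α₁, β₁, γ₁, hθ₁, hα₁, hβ₁, hγ₁, ?_⟩
  rw [hθe, Rz_congr hαe, Rz_congr hβe, Rz_congr hγe, ← hM]
  exact Matrix.eta_fin_two U
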